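/- Let n ≥ 2, 1 ≤ s ≤ n, and 2s−n ≤ k ≤ s be integers, and let K be a field. Then every matrix y ∈ M_n(K) of rank k can be written as y = y₁y₂ where y₁ and y₂ are matrices in M_n(K) of rank exactly s. -/

import Mathlib

open Matrix

section Aux

variable {K : Type*} [Field K]

/-- The diagonal 0-1 matrix with `r` ones. -/
noncomputable def Emat (n r : ℕ) (K : Type*) [Field K] : Matrix (Fin n) (Fin n) K :=
  Matrix.diagonal (fun i : Fin n => if (i : ℕ) < r then (1 : K) else 0)

lemma rank_Emat {n r : ℕ} (hrn : r ≤ n) : (Emat n r K).rank = r := by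
  classical
  rw [Emat, Matrix.rank_diagonal]
  have h : ∀ i : Fin n, ((if (i : ℕ) < r then (1 : K) else 0) ≠ 0) ↔ (i : ℕ) < r := by
    intro i; split <;> simp_all
  rw [Fintype.card_congr (Equiv.subtypeEquivRight h)]
  rw [Fintype.card_congr
    (⟨fun i => (⟨i.1, i.2⟩ : Fin r), fun i => ⟨⟨i, lt_of_lt_of_le i.2 hrn⟩, i.2⟩,
      fun i => Subtype.ext rfl, fun i => rfl⟩ : {i : Fin n // (i : ℕ) < r} ≃ Fin r)]
  exact Fintype.card_fin r

/-- Smith-type normal form over a field. -/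
lemma smith_form {n : ℕ} (y : Matrix (Fin n) (Fin n) K) :
    ∃ P Q : Matrix (Fin n) (Fin n) K, IsUnit P.det ∧ IsUnit Q.det ∧
      y = P * Emat n y.rank K * Q := by
  classical
  set f := y.mulVecLin with hfdef
  set r := y.rank with hrdef
  have hrn : r ≤ n := by simpa using y.rank_le_card_width
  have hrange : Module.finrank K (LinearMap.range f) = r := rfl
  have hdim : Module.finrank K (Fin n → K) = n := Module.finrank_fin_fun K
  obtain ⟨R', hR'⟩ := Submodule.exists_isCompl (LinearMap.range f)
  obtain ⟨D, hD⟩ := Submodule.exists_isCompl (LinearMap.ker f)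
  have hker : Module.finrank K (LinearMap.ker f) = n - r := by
    have h1 := LinearMap.finrank_range_add_finrank_ker f
    rw [hrange, hdim] at h1; omega
  have hR'rank : Module.finrank K R' = n - r := by
    have h1 := Submodule.finrank_add_eq_of_isCompl hR'
    rw [hrange, hdim] at h1; omega
  let bR : Module.Basis (Fin r) K (LinearMap.range f) := Module.finBasisOfFinrankEq K _ hrange
  let bR' : Module.Basis (Fin (n - r)) K R' := Module.finBasisOfFinrankEq K _ hR'rank
  let bN : Module.Basis (Fin (n - r)) K (LinearMap.ker f) := Module.finBasisOfFinrankEq K _ hker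
  let φ : D ≃ₗ[K] LinearMap.range f :=
    (Submodule.quotientEquivOfIsCompl _ D hD).symm.trans f.quotKerEquivRange
  have hφ : ∀ d : D, (φ d : Fin n → K) = f d := fun d => rfl
  let bD : Module.Basis (Fin r) K D := bR.map φ.symm
  have hfbD : ∀ i, f ((bD i : D) : Fin n → K) = (bR i : Fin n → K) := by
    intro i
    have h1 := hφ (φ.symm (bR i))
    rw [LinearEquiv.apply_symm_apply] at h1
    simp only [bD, Module.Basis.map_apply]
    exact h1.symm
  let e : Fin r ⊕ Fin (n - r) ≃ Fin n := finSumFinEquiv.trans (finCongr (by omega))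
  let b : Module.Basis (Fin n) K (Fin n → K) :=
    ((bD.prod bN).map (Submodule.prodEquivOfIsCompl D (LinearMap.ker f) hD.symm)).reindex e
  let c : Module.Basis (Fin n) K (Fin n → K) :=
    ((bR.prod bR').map (Submodule.prodEquivOfIsCompl _ R' hR')).reindex e
  have hbl : ∀ j' : Fin r, b (e (Sum.inl j')) = ((bD j' : D) : Fin n → K) := by
    intro j'
    simp only [b, Module.Basis.reindex_apply, Equiv.symm_apply_apply, Module.Basis.map_apply]
    rw [show (bD.prod bN) (Sum.inl j') = (bD j', 0) from
      Prod.ext (Module.Basis.prod_apply_inl_fst _ _ _) (Module.Basis.prod_apply_inl_snd _ _ _)]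
    simp [Submodule.coe_prodEquivOfIsCompl']
  have hbr : ∀ j'' : Fin (n - r), b (e (Sum.inr j'')) = ((bN j'' : _) : Fin n → K) := by
    intro j''
    simp only [b, Module.Basis.reindex_apply, Equiv.symm_apply_apply, Module.Basis.map_apply]
    rw [show (bD.prod bN) (Sum.inr j'') = (0, bN j'') from
      Prod.ext (Module.Basis.prod_apply_inr_fst _ _ _) (Module.Basis.prod_apply_inr_snd _ _ _)]
    simp [Submodule.coe_prodEquivOfIsCompl']
  have hcl : ∀ i' : Fin r, c (e (Sum.inl i')) = ((bR i' : _) : Fin n → K) := by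
    intro i'
    simp only [c, Module.Basis.reindex_apply, Equiv.symm_apply_apply, Module.Basis.map_apply]
    rw [show (bR.prod bR') (Sum.inl i') = (bR i', 0) from
      Prod.ext (Module.Basis.prod_apply_inl_fst _ _ _) (Module.Basis.prod_apply_inl_snd _ _ _)]
    simp [Submodule.coe_prodEquivOfIsCompl']
  have heval_l : ∀ j' : Fin r, ((e (Sum.inl j') : Fin n) : ℕ) = (j' : ℕ) := by
    intro j'; simp [e, finSumFinEquiv_apply_left]
  have heval_r : ∀ j'' : Fin (n - r), ((e (Sum.inr j'') : Fin n) : ℕ) = r + (j'' : ℕ) := by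
    intro j''; simp [e, finSumFinEquiv_apply_right]
  have hM : LinearMap.toMatrix b c f = Emat n r K := by
    ext i j
    rw [LinearMap.toMatrix_apply]
    cases hsj : e.symm j with
    | inl j' =>
      have hjval : j = e (Sum.inl j') := by rw [← hsj, Equiv.apply_symm_apply]
      have hjlt : (j : ℕ) < r := by rw [hjval, heval_l]; exact j'.isLt
      have hjj' : (j : ℕ) = (j' : ℕ) := by rw [hjval, heval_l]
      rw [show b j = ((bD j' : D) : Fin n → K) from by rw [hjval]; exact hbl j']
      rw [hfbD, ← hcl, Module.Basis.repr_self, Finsupp.single_apply]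
      rw [Emat, Matrix.diagonal_apply]
      by_cases hij : i = j
      · subst hij
        rw [if_pos hjval.symm, if_pos rfl, if_pos hjlt]
      · rw [if_neg (fun h => hij (by rw [hjval, h])), if_neg hij]
    | inr j'' =>
      have hjval : j = e (Sum.inr j'') := by rw [← hsj, Equiv.apply_symm_apply]
      have hjge : ¬ ((j : ℕ) < r) := by rw [hjval, heval_r]; omega
      rw [show b j = ((bN j'' : _) : Fin n → K) from by rw [hjval]; exact hbr j'']
      rw [LinearMap.map_coe_ker, map_zero]
      rw [Emat, Matrix.diagonal_apply]
      by_cases hij : i = j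
      · rw [if_pos hij]; subst hij; rw [if_neg hjge]; rfl
      · rw [if_neg hij]; rfl
  let std : Module.Basis (Fin n) K (Fin n → K) := Pi.basisFun K (Fin n)
  have hy' : y = LinearMap.toMatrix std std f := by
    show y = LinearMap.toMatrix (Pi.basisFun K (Fin n)) (Pi.basisFun K (Fin n)) f
    rw [LinearMap.toMatrix_eq_toMatrix']
    rw [hfdef, ← Matrix.toLin'_apply', LinearMap.toMatrix'_toLin']
  refine ⟨LinearMap.toMatrix c std LinearMap.id, LinearMap.toMatrix std b LinearMap.id, ?_, ?_, ?_⟩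
  · have h1 : LinearMap.toMatrix c std LinearMap.id * LinearMap.toMatrix std c LinearMap.id
        = 1 := by
      rw [← LinearMap.toMatrix_comp std c std, LinearMap.id_comp, LinearMap.toMatrix_id]
    have := congrArg Matrix.det h1
    rw [Matrix.det_mul, Matrix.det_one] at this
    exact IsUnit.of_mul_eq_one _ this
  · have h1 : LinearMap.toMatrix std b LinearMap.id * LinearMap.toMatrix b std LinearMap.id
        = 1 := by
      rw [← LinearMap.toMatrix_comp b std b, LinearMap.id_comp, LinearMap.toMatrix_id]
    have := congrArg Matrix.det h1
    rw [Matrix.det_mul, Matrix.det_one] at this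
    exact IsUnit.of_mul_eq_one _ this
  · rw [← hM]
    calc y = LinearMap.toMatrix std std (LinearMap.id ∘ₗ (f ∘ₗ LinearMap.id)) := by
            rw [LinearMap.id_comp, LinearMap.comp_id]; exact hy'
      _ = LinearMap.toMatrix c std LinearMap.id * LinearMap.toMatrix std c (f ∘ₗ LinearMap.id) :=
            LinearMap.toMatrix_comp _ c _ _ _
      _ = LinearMap.toMatrix c std LinearMap.id *
            (LinearMap.toMatrix b c f * LinearMap.toMatrix std b LinearMap.id) := by
            rw [LinearMap.toMatrix_comp std b c]
      _ = _ := by rw [← mul_assoc]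

end Aux

section Perm

/-- swap the blocks `[k, s)` and `[s, 2s-k)`. -/
def gfun (k s : ℕ) : ℕ → ℕ := fun i =>
  if k ≤ i ∧ i < s then i + (s - k)
  else if s ≤ i ∧ i < 2 * s - k then i - (s - k)
  else i

lemma gfun_lt {n k s : ℕ} (hk : k ≤ s) (hsn : 2 * s ≤ k + n) {i : ℕ} (hi : i < n) :
    gfun k s i < n := by
  unfold gfun; split <;> [omega; split <;> omega]

lemma gfun_invol {k s : ℕ} (hk : k ≤ s) (i : ℕ) : gfun k s (gfun k s i) = i := by
  unfold gfun
  by_cases h1 : k ≤ i ∧ i < s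
  · rw [if_pos h1, if_neg (by omega), if_pos (by omega)]
    omega
  · rw [if_neg h1]
    by_cases h2 : s ≤ i ∧ i < 2 * s - k
    · rw [if_pos h2, if_pos (by omega)]
      omega
    · rw [if_neg h2, if_neg h1, if_neg h2]

end Perm

theorem stmt_0 {n s k : ℕ} (K : Type*) [Field K]
    (hn : 2 ≤ n) (hs1 : 1 ≤ s) (hsn : s ≤ n) (hk1 : 2 * s ≤ k + n) (hk2 : k ≤ s)
    (y : Matrix (Fin n) (Fin n) K) (hy : y.rank = k) :
    ∃ y₁ y₂ : Matrix (Fin n) (Fin n) K, y₁.rank = s ∧ y₂.rank = s ∧ y = y₁ * y₂ := by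
  classical
  obtain ⟨P, Q, hP, hQ, hyPQ⟩ := smith_form y
  rw [hy] at hyPQ
  -- the permutation
  let τ : Equiv.Perm (Fin n) :=
    ⟨fun i => ⟨gfun k s i, gfun_lt hk2 hk1 i.isLt⟩,
     fun i => ⟨gfun k s i, gfun_lt hk2 hk1 i.isLt⟩,
     fun i => Fin.ext (gfun_invol hk2 i),
     fun i => Fin.ext (gfun_invol hk2 i)⟩
  have hτ : ∀ i : Fin n, ((τ i : Fin n) : ℕ) = gfun k s (i : ℕ) := fun i => rfl
  let A : Matrix (Fin n) (Fin n) K := Emat n s K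
  let B : Matrix (Fin n) (Fin n) K := (Emat n s K).submatrix τ (Equiv.refl (Fin n))
  have hAB : A * B = Emat n k K := by
    ext i j
    rw [Matrix.mul_apply]
    have hBij : B i j = if (τ i) = j then (if (j : ℕ) < s then (1 : K) else 0) else 0 := by
      simp only [B, Emat, Matrix.submatrix_apply, Equiv.coe_refl, id_eq, Matrix.diagonal_apply]
      by_cases h : τ i = j
      · rw [if_pos h, if_pos h, h]
      · rw [if_neg h, if_neg h]
    have hsum : ∀ l : Fin n, A i l * B l j =
        if l = i then (if (i : ℕ) < s then (1 : K) else 0) * B i j else 0 := by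
      intro l
      simp only [A, Emat, Matrix.diagonal_apply]
      by_cases hl : l = i
      · subst hl; simp
      · rw [if_neg (fun h => hl (h.symm)), if_neg hl, zero_mul]
    rw [Finset.sum_congr rfl (fun l _ => hsum l), Finset.sum_ite_eq' Finset.univ i _,
      if_pos (Finset.mem_univ i), hBij]
    rw [Emat, Matrix.diagonal_apply]
    by_cases his : (i : ℕ) < s
    · rw [if_pos his, one_mul]
      by_cases hik : (i : ℕ) < k
      · -- τ i = i
        have hτi : τ i = i := Fin.ext (by rw [hτ]; unfold gfun; split <;> [omega; split <;> omega])
        by_cases hij : i = j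
        · subst hij; rw [if_pos hτi, if_pos rfl, if_pos hik, if_pos his]
        · rw [if_neg hij, if_neg (fun h => hij (hτi ▸ h))]
      · -- k ≤ i < s, τ i = i + (s-k) ≥ s
        have hτi : ((τ i : Fin n) : ℕ) = (i : ℕ) + (s - k) := by
          rw [hτ]; unfold gfun; rw [if_pos ⟨by omega, his⟩]
        have h1 : ∀ m : Fin n, τ i = m → ¬ ((m : ℕ) < s) := by
          intro m hm; rw [← hm, hτi]; omega
        by_cases hij : i = j
        · subst hij
          rw [if_pos rfl, if_neg (by omega : ¬ ((i:ℕ) < k))]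
          by_cases hτj : τ i = i
          · rw [if_pos hτj, if_neg (h1 i hτj)]
          · rw [if_neg hτj]
        · rw [if_neg hij]
          by_cases hτj : τ i = j
          · rw [if_pos hτj, if_neg (h1 j hτj)]
          · rw [if_neg hτj]
    · rw [if_neg his, zero_mul]
      by_cases hij : i = j
      · subst hij; rw [if_pos rfl, if_neg (by omega : ¬ ((i:ℕ) < k))]
      · rw [if_neg hij]
  have hArank : A.rank = s := rank_Emat hsn
  have hBrank : B.rank = s := by
    have := Matrix.rank_submatrix (Emat n s K) τ (Equiv.refl (Fin n))
    rw [show B = (Emat n s K).submatrix τ (Equiv.refl (Fin n)) from rfl, this, rank_Emat hsn]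
  refine ⟨P * A, B * Q, ?_, ?_, ?_⟩
  · rw [Matrix.rank_mul_eq_right_of_isUnit_det P A hP, hArank]
  · rw [Matrix.rank_mul_eq_left_of_isUnit_det Q B hQ, hBrank]
  · rw [hyPQ, ← hAB]
    simp only [Matrix.mul_assoc]
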